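/- Let G=(V,E) be a finite connected simple graph with radius R(G) ≥ 1, let c ∈ C(G), let y ∈ V satisfy d_G(c,y) = R(G), and let γ = c a₁ … a_{R(G)−1} y be a shortest path from c to y. If there is no vertex z ≠ y such that every shortest path μ from c to z satisfies γ ∩ μ = {c} and R(G) − 1 ≤ d_G(c,z), then the eccentricity of a₁ in G is at most R(G) − 1 (contradicting the minimality of R(G)); consequently some such z always exists. -/

import Mathlib

open SimpleGraph

noncomputable def eccentr {V : Type} (G : SimpleGraph V) (x : V) : ℕ :=
  sSup (Set.range (G.dist x))

noncomputable def grRadius {V : Type} (G : SimpleGraph V) : ℕ :=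
  sInf (Set.range (eccentr G))

def ncontract {V : Type} (G : SimpleGraph V) (x : V) :
    SimpleGraph {v : V // ¬ G.Adj x v} where
  Adj a b := G.Adj a.1 b.1 ∨
    (a.1 = x ∧ b.1 ≠ x ∧ ∃ y, G.Adj x y ∧ G.Adj y b.1) ∨
    (b.1 = x ∧ a.1 ≠ x ∧ ∃ y, G.Adj x y ∧ G.Adj y a.1)
  symm := ⟨fun a b h => by
    rcases h with h | h | h
    · exact Or.inl h.symm
    · exact Or.inr (Or.inr h)
    · exact Or.inr (Or.inl h)⟩
  loopless := ⟨fun a h => by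
    rcases h with h | ⟨h1, h2, -⟩ | ⟨h1, h2, -⟩
    · exact G.loopless.irrefl _ h
    · exact h2 h1
    · exact h2 h1⟩

lemma dist_getVert_le {V : Type} {G : SimpleGraph V} {u v : V} (hconn : G.Connected)
    (p : G.Walk u v) (i j : ℕ) (hij : i ≤ j) :
    G.dist (p.getVert i) (p.getVert j) ≤ j - i := by
  obtain ⟨n, rfl⟩ := Nat.exists_eq_add_of_le hij
  induction n with
  | zero => simp
  | succ n ih =>
    have htr := hconn.dist_triangle (u := p.getVert i)
      (v := p.getVert (i + n)) (w := p.getVert (i + n + 1))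
    have hstep : G.dist (p.getVert (i + n)) (p.getVert (i + n + 1)) ≤ 1 := by
      by_cases h : i + n < p.length
      · exact SimpleGraph.dist_le (SimpleGraph.Walk.cons (p.adj_getVert_succ h) SimpleGraph.Walk.nil)
      · rw [p.getVert_of_length_le (by omega), p.getVert_of_length_le (by omega)]
        rw [SimpleGraph.dist_self]; omega
    have heq : i + (n + 1) = i + n + 1 := by ring
    rw [heq]
    omega

lemma dist_le_eccentr {V : Type} [Fintype V] (G : SimpleGraph V) (x w : V) :
    G.dist x w ≤ eccentr G x :=
  le_csSup (Set.Finite.bddAbove (Set.finite_range _)) ⟨w, rfl⟩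

lemma eccentr_le {V : Type} {G : SimpleGraph V} {x : V} {n : ℕ}
    (h : ∀ w, G.dist x w ≤ n) : eccentr G x ≤ n :=
  csSup_le ⟨G.dist x x, ⟨x, rfl⟩⟩ (by rintro _ ⟨w, rfl⟩; exact h w)

lemma grRadius_le_eccentr {V : Type} (G : SimpleGraph V) (x : V) :
    grRadius G ≤ eccentr G x := Nat.sInf_le ⟨x, rfl⟩

theorem stmt_14 {V : Type} [Fintype V] (G : SimpleGraph V) (hconn : G.Connected)
    (hR : 1 ≤ grRadius G) (c y : V) (hc : eccentr G c = grRadius G)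
    (hy : G.dist c y = grRadius G) (γ : G.Walk c y) (hγp : γ.IsPath)
    (hγl : γ.length = grRadius G) :
    ((¬ ∃ z : V, z ≠ y ∧
        (∀ μ : G.Walk c z, μ.IsPath → μ.length = G.dist c z →
          ∀ v ∈ γ.support, v ∈ μ.support → v = c) ∧
        grRadius G - 1 ≤ G.dist c z) →
      eccentr G (γ.getVert 1) ≤ grRadius G - 1) ∧
    ∃ z : V, z ≠ y ∧
      (∀ μ : G.Walk c z, μ.IsPath → μ.length = G.dist c z →
        ∀ v ∈ γ.support, v ∈ μ.support → v = c) ∧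
      grRadius G - 1 ≤ G.dist c z := by
  have key : ∃ z : V, z ≠ y ∧
      (∀ μ : G.Walk c z, μ.IsPath → μ.length = G.dist c z →
        ∀ v ∈ γ.support, v ∈ μ.support → v = c) ∧
      grRadius G - 1 ≤ G.dist c z := by
    by_contra hne
    push_neg at hne
    have hcy : c ≠ y := by
      intro h
      rw [h, SimpleGraph.dist_self] at hy
      omega
    by_cases hR1 : grRadius G = 1
    · have hmid : ∀ μ : G.Walk c c, μ.IsPath → μ.length = G.dist c c →
          ∀ v ∈ γ.support, v ∈ μ.support → v = c := by
        intro μ _ hl v _ hv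
        have h0 : μ.length = 0 := by rw [hl, SimpleGraph.dist_self]
        have hnil : μ.Nil := SimpleGraph.Walk.nil_iff_length_eq.mpr h0
        rw [SimpleGraph.Walk.nil_iff_support_eq.mp hnil] at hv
        simpa using hv
      have h0 := hne c hcy hmid
      rw [SimpleGraph.dist_self] at h0
      omega
    · have hR2 : 2 ≤ grRadius G := by omega
      have hadj : G.Adj c (γ.getVert 1) := by
        have := γ.adj_getVert_succ (i := 0) (by omega : 0 < γ.length)
        rwa [γ.getVert_zero] at this
      have hdac : G.dist (γ.getVert 1) c ≤ 1 := by
        rw [SimpleGraph.dist_comm]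
        exact SimpleGraph.dist_le (SimpleGraph.Walk.cons hadj SimpleGraph.Walk.nil)
      have hecc : eccentr G (γ.getVert 1) ≤ grRadius G - 1 := by
        apply eccentr_le
        intro w
        by_cases hwy : w = y
        · subst hwy
          have h := dist_getVert_le hconn γ 1 γ.length (by omega)
          rwa [γ.getVert_length, hγl] at h
        · by_cases hd : grRadius G - 1 ≤ G.dist c w
          · have hnall : ¬ (∀ μ : G.Walk c w, μ.IsPath → μ.length = G.dist c w →
                ∀ v ∈ γ.support, v ∈ μ.support → v = c) := by
              intro hall
              have := hne w hwy hall
              omega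
            push_neg at hnall
            obtain ⟨μ, hμp, hμl, v, hvγ, hvμ, hvc⟩ := hnall
            obtain ⟨i, hiv, hile⟩ := SimpleGraph.Walk.mem_support_iff_exists_getVert.mp hvγ
            obtain ⟨j, hjv, hjle⟩ := SimpleGraph.Walk.mem_support_iff_exists_getVert.mp hvμ
            have hi1 : 1 ≤ i := by
              rcases Nat.eq_zero_or_pos i with h0 | h
              · exfalso; apply hvc; rw [← hiv, h0, γ.getVert_zero]
              · exact h
            have h1 : G.dist c v ≤ i := by
              have h := dist_getVert_le hconn γ 0 i (by omega)
              rwa [γ.getVert_zero, hiv] at h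
            have h2 : G.dist v y ≤ grRadius G - i := by
              have h := dist_getVert_le hconn γ i γ.length hile
              rwa [hiv, γ.getVert_length, hγl] at h
            have h3 : grRadius G ≤ G.dist c v + G.dist v y := by
              rw [← hy]; exact hconn.dist_triangle
            have h4 : G.dist c v ≤ j := by
              have h := dist_getVert_le hconn μ 0 j (by omega)
              rwa [μ.getVert_zero, hjv] at h
            have h5 : G.dist v w ≤ μ.length - j := by
              have h := dist_getVert_le hconn μ j μ.length hjle
              rwa [hjv, μ.getVert_length] at h
            have hdcw : G.dist c w ≤ grRadius G := by
              rw [← hc]; exact dist_le_eccentr G c w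
            have hav : G.dist (γ.getVert 1) v ≤ i - 1 := by
              have h := dist_getVert_le hconn γ 1 i hi1
              rwa [hiv] at h
            have htr : G.dist (γ.getVert 1) w ≤ G.dist (γ.getVert 1) v + G.dist v w :=
              hconn.dist_triangle
            omega
          · have htr : G.dist (γ.getVert 1) w ≤ G.dist (γ.getVert 1) c + G.dist c w :=
              hconn.dist_triangle
            omega
      have hge := grRadius_le_eccentr G (γ.getVert 1)
      omega
  exact ⟨fun h => absurd key h, key⟩
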